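/- Mean-median-mode inequality for the beta distribution: if 1 < a < b, then (a-1)/(a+b-2) < M(a,b) < a/(a+b); if 1 < b < a, then a/(a+b) < M(a,b) < (a-1)/(a+b-2), where M(a,b) is the median of the Beta(a,b) distribution. -/

import Mathlib

open MeasureTheory

/-- `M` is the median of the Beta(a,b) distribution. -/
def IsBetaMedian (a b M : ℝ) : Prop :=
  M ∈ Set.Ioo (0 : ℝ) 1 ∧
    (∫ x in Set.Ioo (0 : ℝ) M, x ^ (a - 1) * (1 - x) ^ (b - 1))
      = ∫ x in Set.Ioo M 1, x ^ (a - 1) * (1 - x) ^ (b - 1)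

section BetaAux
open intervalIntegral Set



noncomputable def betaf (a b : ℝ) : ℝ → ℝ := fun x => x ^ (a - 1) * (1 - x) ^ (b - 1)

lemma betaf_cont {a b : ℝ} (ha : 1 ≤ a) (hb : 1 ≤ b) : Continuous (betaf a b) := by
  exact (Real.continuous_rpow_const (by linarith)).mul
    ((Real.continuous_rpow_const (by linarith)).comp (continuous_const.sub continuous_id))

lemma betaf_pos {a b x : ℝ} (h0 : 0 < x) (h1 : x < 1) : 0 < betaf a b x := by
  unfold betaf
  have h2 : 0 < 1 - x := by linarith
  positivity

lemma betaf_nonneg {a b x : ℝ} (h0 : 0 ≤ x) (h1 : x ≤ 1) : 0 ≤ betaf a b x := by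
  unfold betaf
  have : (0:ℝ) ≤ 1 - x := by linarith
  positivity

lemma betaf_zero {a b : ℝ} (ha : 1 < a) : betaf a b 0 = 0 := by
  unfold betaf
  rw [Real.zero_rpow (by linarith)]
  ring

noncomputable def betaH (a b μ : ℝ) : ℝ → ℝ := fun t =>
  (a - 1) * (Real.log (μ - t) - Real.log (μ + t))
    + (b - 1) * (Real.log (1 - μ + t) - Real.log (1 - μ - t))

lemma betaH_zero (a b μ : ℝ) : betaH a b μ 0 = 0 := by
  unfold betaH; simp

lemma betaH_hasDeriv (a b μ t : ℝ) (h1 : μ - t ≠ 0) (h2 : μ + t ≠ 0)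
    (h3 : 1 - μ + t ≠ 0) (h4 : 1 - μ - t ≠ 0) :
    HasDerivAt (betaH a b μ)
      ((a - 1) * (-(μ - t)⁻¹ - (μ + t)⁻¹) + (b - 1) * ((1 - μ + t)⁻¹ + (1 - μ - t)⁻¹)) t := by
  have l1 : HasDerivAt (fun x => Real.log (μ - x)) ((-1) / (μ - t)) t :=
    ((hasDerivAt_id t).const_sub μ).log h1
  have l2 : HasDerivAt (fun x => Real.log (μ + x)) (1 / (μ + t)) t :=
    ((hasDerivAt_id t).const_add μ).log h2
  have l3 : HasDerivAt (fun x => Real.log (1 - μ + x)) (1 / (1 - μ + t)) t :=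
    ((hasDerivAt_id t).const_add (1 - μ)).log h3
  have l4 : HasDerivAt (fun x => Real.log (1 - μ - x)) ((-1) / (1 - μ - t)) t :=
    ((hasDerivAt_id t).const_sub (1 - μ)).log h4
  have := (((l1.sub l2).const_mul (a - 1))).add (((l3.sub l4).const_mul (b - 1)))
  refine this.congr_deriv ?_
  ring

lemma betaH_contAt (a b μ t : ℝ) (h1 : μ - t ≠ 0) (h2 : μ + t ≠ 0)
    (h3 : 1 - μ + t ≠ 0) (h4 : 1 - μ - t ≠ 0) :
    ContinuousAt (betaH a b μ) t := by
  exact (betaH_hasDeriv a b μ t h1 h2 h3 h4).continuousAt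

lemma betaH_deriv_eq (a b μ t : ℝ) (h1 : μ - t ≠ 0) (h2 : μ + t ≠ 0)
    (h3 : 1 - μ + t ≠ 0) (h4 : 1 - μ - t ≠ 0) :
    (a - 1) * (-(μ - t)⁻¹ - (μ + t)⁻¹) + (b - 1) * ((1 - μ + t)⁻¹ + (1 - μ - t)⁻¹)
      = 2 * ((b - 1) * (1 - μ) * (μ ^ 2 - t ^ 2) - (a - 1) * μ * ((1 - μ) ^ 2 - t ^ 2))
          / ((μ - t) * (μ + t) * ((1 - μ - t) * (1 - μ + t))) := by
  field_simp
  ring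

lemma betaf_log (a b x : ℝ) (h0 : 0 < x) (h1 : x < 1) :
    betaf a b x = Real.exp ((a - 1) * Real.log x + (b - 1) * Real.log (1 - x)) := by
  unfold betaf
  rw [Real.rpow_def_of_pos h0, Real.rpow_def_of_pos (by linarith), ← Real.exp_add]
  congr 1
  ring

lemma betaH_neg_iff {a b μ t : ℝ} (ht : 0 ≤ t) (h1 : 0 < μ - t) (h4 : 0 < 1 - μ - t) :
    betaH a b μ t < 0 ↔ betaf a b (μ - t) < betaf a b (μ + t) := by
  rw [betaf_log a b (μ - t) h1 (by linarith), betaf_log a b (μ + t) (by linarith) (by linarith),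
    Real.exp_lt_exp]
  have e1 : (1:ℝ) - (μ - t) = 1 - μ + t := by ring
  have e2 : (1:ℝ) - (μ + t) = 1 - μ - t := by ring
  rw [e1, e2]
  unfold betaH
  constructor <;> intro h <;> linarith

lemma betaH_pos_iff {a b μ t : ℝ} (ht : 0 ≤ t) (h1 : 0 < μ - t) (h4 : 0 < 1 - μ - t) :
    0 < betaH a b μ t ↔ betaf a b (μ + t) < betaf a b (μ - t) := by
  rw [betaf_log a b (μ - t) h1 (by linarith), betaf_log a b (μ + t) (by linarith) (by linarith),
    Real.exp_lt_exp]
  have e1 : (1:ℝ) - (μ - t) = 1 - μ + t := by ring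
  have e2 : (1:ℝ) - (μ + t) = 1 - μ - t := by ring
  rw [e1, e2]
  unfold betaH
  constructor <;> intro h <;> linarith

lemma Ioo_integral_eq (g : ℝ → ℝ) {u v : ℝ} (huv : u ≤ v) :
    (∫ x in Set.Ioo u v, g x) = ∫ x in u..v, g x := by
  rw [intervalIntegral.integral_of_le huv, MeasureTheory.integral_Ioc_eq_integral_Ioo]

lemma median_interval {a b M : ℝ} (hM : IsBetaMedian a b M) :
    (∫ x in (0:ℝ)..M, betaf a b x) = ∫ x in M..1, betaf a b x := by
  obtain ⟨hIoo, heq⟩ := hM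
  rw [← Ioo_integral_eq (betaf a b) hIoo.1.le, ← Ioo_integral_eq (betaf a b) hIoo.2.le]
  exact heq

lemma median_symm {a b M : ℝ} (hM : IsBetaMedian a b M) : IsBetaMedian b a (1 - M) := by
  obtain ⟨hIoo, heq⟩ := hM
  have h1 : (1:ℝ) - M ∈ Set.Ioo (0:ℝ) 1 := ⟨by linarith [hIoo.2], by linarith [hIoo.1]⟩
  refine ⟨h1, ?_⟩
  have hfe : (fun x : ℝ => x ^ (b - 1) * (1 - x) ^ (a - 1))
      = fun x => (fun y : ℝ => y ^ (a - 1) * (1 - y) ^ (b - 1)) (1 - x) := by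
    funext x
    simp only [sub_sub_cancel]
    ring
  have L : (∫ x in (0:ℝ)..(1 - M), x ^ (b - 1) * (1 - x) ^ (a - 1))
      = ∫ x in M..1, x ^ (a - 1) * (1 - x) ^ (b - 1) := by
    rw [hfe, intervalIntegral.integral_comp_sub_left
      (fun y : ℝ => y ^ (a - 1) * (1 - y) ^ (b - 1)) 1]
    norm_num
  have R : (∫ x in (1 - M)..1, x ^ (b - 1) * (1 - x) ^ (a - 1))
      = ∫ x in (0:ℝ)..M, x ^ (a - 1) * (1 - x) ^ (b - 1) := by
    rw [hfe, intervalIntegral.integral_comp_sub_left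
      (fun y : ℝ => y ^ (a - 1) * (1 - y) ^ (b - 1)) 1]
    norm_num
  rw [Ioo_integral_eq _ h1.1.le, Ioo_integral_eq _ h1.2.le, L, R,
    ← Ioo_integral_eq _ hIoo.1.le, ← Ioo_integral_eq _ hIoo.2.le]
  exact heq.symm

lemma mean_identity {a b : ℝ} (ha : 1 < a) (hb : 1 < b) :
    ∫ x in (0:ℝ)..1, (a / (a + b) - x) * betaf a b x = 0 := by
  have hab : (0:ℝ) < a + b := by linarith
  have key : ∀ x ∈ uIcc (0:ℝ) 1, HasDerivAt (fun y => y ^ a * (1 - y) ^ b)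
      ((a + b) * ((a / (a + b) - x) * betaf a b x)) x := by
    intro x hx
    rw [uIcc_of_le zero_le_one] at hx
    have h1 : HasDerivAt (fun y : ℝ => y ^ a) (a * x ^ (a - 1)) x :=
      Real.hasDerivAt_rpow_const (Or.inr ha.le)
    have h2 : HasDerivAt (fun y : ℝ => (1 - y) ^ b) (b * (1 - x) ^ (b - 1) * (-1)) x := by
      have := (Real.hasDerivAt_rpow_const (p := b) (x := 1 - x) (Or.inr hb.le)).comp x
        ((hasDerivAt_id x).const_sub 1)
      exact this
    have h := h1.mul h2
    refine h.congr_deriv ?_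
    unfold betaf
    rcases eq_or_lt_of_le hx.1 with h0 | h0
    · rw [← h0]
      rw [Real.zero_rpow (by linarith : a - 1 ≠ 0), Real.zero_rpow (by linarith : a ≠ 0)]
      ring
    rcases eq_or_lt_of_le hx.2 with h1' | h1'
    · rw [h1']
      rw [show (1:ℝ) - 1 = 0 by ring, Real.zero_rpow (by linarith : b - 1 ≠ 0),
        Real.zero_rpow (by linarith : b ≠ 0)]
      ring
    · have e1 : x ^ a = x ^ (a - 1) * x := by
        rw [← Real.rpow_add_one (ne_of_gt h0) (a - 1)]
        norm_num
      have e2 : (1 - x) ^ b = (1 - x) ^ (b - 1) * (1 - x) := by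
        rw [← Real.rpow_add_one (by linarith : (1:ℝ) - x ≠ 0) (b - 1)]
        norm_num
      rw [e1, e2]
      have : a / (a + b) * (a + b) = a := div_mul_cancel₀ a (ne_of_gt hab)
      field_simp
      ring
  have hint : IntervalIntegrable (fun x => (a + b) * ((a / (a + b) - x) * betaf a b x))
      volume 0 1 := by
    apply Continuous.intervalIntegrable
    exact continuous_const.mul ((continuous_const.sub continuous_id).mul (betaf_cont ha.le hb.le))
  have := intervalIntegral.integral_eq_sub_of_hasDerivAt key hint
  rw [show ((1:ℝ) ^ a * (1 - 1) ^ b) - ((0:ℝ) ^ a * (1 - 0) ^ b) = 0 by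
      rw [show (1:ℝ) - 1 = 0 by ring, Real.zero_rpow (by linarith : b ≠ 0),
        Real.zero_rpow (by linarith : a ≠ 0)]; ring] at this
  rw [intervalIntegral.integral_const_mul] at this
  have := (mul_eq_zero.mp this).resolve_left (ne_of_gt hab)
  exact this

-- median comparison wrapper

lemma lt_median {a b M c : ℝ} (ha : 1 ≤ a) (hb : 1 ≤ b) (hM : M ∈ Ioo (0:ℝ) 1)
    (hc : c ∈ Ioo (0:ℝ) 1)
    (hmed : (∫ x in (0:ℝ)..M, betaf a b x) = ∫ x in M..1, betaf a b x)
    (hlt : (∫ x in (0:ℝ)..c, betaf a b x) < ∫ x in c..1, betaf a b x) : c < M := by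
  by_contra h
  push_neg at h  -- M ≤ c
  have i1 : (∫ x in (0:ℝ)..M, betaf a b x) ≤ ∫ x in (0:ℝ)..c, betaf a b x := by
    rw [← intervalIntegral.integral_add_adjacent_intervals
      ((betaf_cont ha hb).intervalIntegrable 0 M) ((betaf_cont ha hb).intervalIntegrable M c)]
    have : 0 ≤ ∫ x in M..c, betaf a b x := by
      apply intervalIntegral.integral_nonneg h
      intro u hu
      exact betaf_nonneg (le_trans hM.1.le hu.1) (le_trans hu.2 hc.2.le)
    linarith
  have i2 : (∫ x in c..1, betaf a b x) ≤ ∫ x in M..1, betaf a b x := by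
    rw [← intervalIntegral.integral_add_adjacent_intervals
      ((betaf_cont ha hb).intervalIntegrable M c) ((betaf_cont ha hb).intervalIntegrable c 1)]
    have : 0 ≤ ∫ x in M..c, betaf a b x := by
      apply intervalIntegral.integral_nonneg h
      intro u hu
      exact betaf_nonneg (le_trans hM.1.le hu.1) (le_trans hu.2 hc.2.le)
    linarith
  linarith

lemma gt_median {a b M c : ℝ} (ha : 1 ≤ a) (hb : 1 ≤ b) (hM : M ∈ Ioo (0:ℝ) 1)
    (hc : c ∈ Ioo (0:ℝ) 1)
    (hmed : (∫ x in (0:ℝ)..M, betaf a b x) = ∫ x in M..1, betaf a b x)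
    (hgt : (∫ x in c..1, betaf a b x) < ∫ x in (0:ℝ)..c, betaf a b x) : M < c := by
  by_contra h
  push_neg at h  -- c ≤ M
  have i1 : (∫ x in (0:ℝ)..c, betaf a b x) ≤ ∫ x in (0:ℝ)..M, betaf a b x := by
    rw [← intervalIntegral.integral_add_adjacent_intervals
      ((betaf_cont ha hb).intervalIntegrable 0 c) ((betaf_cont ha hb).intervalIntegrable c M)]
    have : 0 ≤ ∫ x in c..M, betaf a b x := by
      apply intervalIntegral.integral_nonneg h
      intro u hu
      exact betaf_nonneg (le_trans hc.1.le hu.1) (le_trans hu.2 hM.2.le)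
    linarith
  have i2 : (∫ x in M..1, betaf a b x) ≤ ∫ x in c..1, betaf a b x := by
    rw [← intervalIntegral.integral_add_adjacent_intervals
      ((betaf_cont ha hb).intervalIntegrable c M) ((betaf_cont ha hb).intervalIntegrable M 1)]
    have : 0 ≤ ∫ x in c..M, betaf a b x := by
      apply intervalIntegral.integral_nonneg h
      intro u hu
      exact betaf_nonneg (le_trans hc.1.le hu.1) (le_trans hu.2 hM.2.le)
    linarith
  linarith

lemma ineqA {a b : ℝ} (ha : 1 < a) (hab : a < b) :
    (∫ x in (0:ℝ)..((a - 1) / (a + b - 2)), betaf a b x)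
      < ∫ x in ((a - 1) / (a + b - 2))..1, betaf a b x := by
  have hb : 1 < b := lt_trans ha hab
  have hs : (0:ℝ) < a + b - 2 := by linarith
  set m := (a - 1) / (a + b - 2) with hm_def
  have hm0 : 0 < m := div_pos (by linarith) hs
  have hm2 : m < 1 / 2 := by
    rw [div_lt_div_iff₀ hs (by norm_num)]
    linarith
  have hma : a - 1 = m * (a + b - 2) := by
    rw [hm_def, div_mul_cancel₀ _ hs.ne']
  have hmb : b - 1 = (1 - m) * (a + b - 2) := by
    have : (1:ℝ) - m = (b - 1) / (a + b - 2) := by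
      rw [hm_def]; field_simp; ring
    rw [this]; field_simp
  -- H strictly decreasing on Ico 0 m
  have hanti : StrictAntiOn (betaH a b m) (Ico 0 m) := by
    apply strictAntiOn_of_deriv_neg (convex_Ico 0 m)
    · intro t ht
      exact (betaH_contAt a b m t (by simp at ht ⊢; linarith [ht.1, ht.2])
        (by simp at ht ⊢; linarith [ht.1, ht.2]) (by simp at ht ⊢; linarith [ht.1, ht.2])
        (by simp at ht ⊢; linarith [ht.1, ht.2])).continuousWithinAt
    · rw [interior_Ico]
      intro t ht
      obtain ⟨ht0, htm⟩ := ht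
      have p1 : 0 < m - t := by linarith
      have p2 : 0 < m + t := by linarith
      have p3 : 0 < 1 - m + t := by linarith
      have p4 : 0 < 1 - m - t := by linarith
      rw [(betaH_hasDeriv a b m t p1.ne' p2.ne' p3.ne' p4.ne').deriv,
        betaH_deriv_eq a b m t p1.ne' p2.ne' p3.ne' p4.ne']
      apply div_neg_of_neg_of_pos
      · have hN : (b - 1) * (1 - m) * (m ^ 2 - t ^ 2) - (a - 1) * m * ((1 - m) ^ 2 - t ^ 2)
            = (a + b - 2) * (t ^ 2 * (2 * m - 1)) := by
          rw [hma, hmb]; ring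
        have : (a + b - 2) * (t ^ 2 * (2 * m - 1)) < 0 :=
          mul_neg_of_pos_of_neg hs (mul_neg_of_pos_of_neg (by positivity) (by linarith))
        nlinarith
      · exact mul_pos (mul_pos p1 p2) (mul_pos p4 p3)
  -- pointwise inequality
  have hpt : ∀ t ∈ Ioo (0:ℝ) m, betaf a b (m - t) < betaf a b (m + t) := by
    intro t ht
    rw [← betaH_neg_iff ht.1.le (by linarith [ht.2]) (by linarith [ht.2])]
    have := hanti (left_mem_Ico.mpr hm0) ⟨ht.1.le, ht.2⟩ ht.1
    rwa [betaH_zero] at this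
  -- integral comparison
  have hint : ∀ u v : ℝ, IntervalIntegrable (betaf a b) volume u v :=
    fun u v => (betaf_cont ha.le hb.le).intervalIntegrable u v
  have key : 0 < ∫ t in (0:ℝ)..m, (betaf a b (m + t) - betaf a b (m - t)) := by
    apply intervalIntegral.intervalIntegral_pos_of_pos_on
    · apply Continuous.intervalIntegrable
      exact (((betaf_cont ha.le hb.le).comp (continuous_const.add continuous_id)).sub
        (((betaf_cont ha.le hb.le)).comp (continuous_const.sub continuous_id)))
    · intro x hx
      exact sub_pos.mpr (hpt x hx)
    · exact hm0
  have isub : (∫ t in (0:ℝ)..m, (betaf a b (m + t) - betaf a b (m - t)))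
      = (∫ t in (0:ℝ)..m, betaf a b (m + t)) - ∫ t in (0:ℝ)..m, betaf a b (m - t) := by
    apply intervalIntegral.integral_sub
    · exact ((betaf_cont ha.le hb.le).comp (continuous_const.add continuous_id)).intervalIntegrable 0 m
    · exact ((betaf_cont ha.le hb.le).comp (continuous_const.sub continuous_id)).intervalIntegrable 0 m
  have e1 : (∫ t in (0:ℝ)..m, betaf a b (m - t)) = ∫ x in (0:ℝ)..m, betaf a b x := by
    rw [intervalIntegral.integral_comp_sub_left (betaf a b) m]
    norm_num
  have e2 : (∫ t in (0:ℝ)..m, betaf a b (m + t)) = ∫ x in m..(2 * m), betaf a b x := by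
    rw [intervalIntegral.integral_comp_add_left (betaf a b) m]
    norm_num [two_mul]
  have e3 : (∫ x in m..1, betaf a b x)
      = (∫ x in m..(2 * m), betaf a b x) + ∫ x in (2 * m)..1, betaf a b x :=
    (intervalIntegral.integral_add_adjacent_intervals (hint m (2 * m)) (hint (2 * m) 1)).symm
  have e4 : 0 ≤ ∫ x in (2 * m)..1, betaf a b x := by
    apply intervalIntegral.integral_nonneg (by linarith)
    intro u hu
    exact betaf_nonneg (by linarith [hu.1]) hu.2
  rw [isub, e1, e2] at key
  linarith

lemma ineqB {a b : ℝ} (ha : 1 < a) (hab : a < b) :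
    (∫ x in (a / (a + b))..1, betaf a b x) < ∫ x in (0:ℝ)..(a / (a + b)), betaf a b x := by
  have hb : 1 < b := lt_trans ha hab
  have habp : (0:ℝ) < a + b := by linarith
  set μ := a / (a + b) with hμ_def
  have hμ0 : 0 < μ := div_pos (by linarith) habp
  have hμ2 : μ < 1 / 2 := by
    rw [hμ_def, div_lt_div_iff₀ habp (by norm_num)]
    linarith
  set C := μ * (1 - μ) * ((b - 1) * μ - (a - 1) * (1 - μ)) with hC_def
  set D := (b - 1) * (1 - μ) - (a - 1) * μ with hD_def
  have hfac : (b - 1) * μ - (a - 1) * (1 - μ) = (b - a) / (a + b) := by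
    rw [hμ_def]; field_simp; ring
  have hC : 0 < C := by
    rw [hC_def, hfac]
    exact mul_pos (mul_pos hμ0 (by linarith)) (div_pos (by linarith) habp)
  have hD : 0 < D := by
    rw [hD_def, hμ_def]
    have h1 : (b - 1) * (1 - a / (a + b)) - (a - 1) * (a / (a + b))
        = ((b - a) * (a + b - 1)) / (a + b) := by field_simp; ring
    rw [h1]
    exact div_pos (mul_pos (by linarith) (by linarith)) habp
  set ts := Real.sqrt (C / D) with hts_def
  have hts0 : 0 < ts := Real.sqrt_pos.mpr (div_pos hC hD)
  have htsμ : ts < μ := by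
    rw [hts_def, Real.sqrt_lt' hμ0, div_lt_iff₀ hD]
    have h1 : D * μ ^ 2 - C = (a - 1) * μ * ((1 - μ) ^ 2 - μ ^ 2) := by
      rw [hC_def, hD_def]; ring
    nlinarith [mul_pos (mul_pos (by linarith : (0:ℝ) < a - 1) hμ0)
      (by nlinarith : (0:ℝ) < (1 - μ) ^ 2 - μ ^ 2)]
  -- sign of N along (0, μ)
  have hNeq : ∀ t : ℝ, (b - 1) * (1 - μ) * (μ ^ 2 - t ^ 2) - (a - 1) * μ * ((1 - μ) ^ 2 - t ^ 2)
      = C - D * t ^ 2 := by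
    intro t; rw [hC_def, hD_def]; ring
  -- H strictly increasing on [0, ts]
  have hmono : StrictMonoOn (betaH a b μ) (Icc 0 ts) := by
    apply strictMonoOn_of_deriv_pos (convex_Icc 0 ts)
    · intro t ht
      obtain ⟨ht0, hts'⟩ := ht
      have htμ : t < μ := lt_of_le_of_lt hts' htsμ
      exact (betaH_contAt a b μ t (by linarith) (by linarith) (by linarith)
        (by linarith)).continuousWithinAt
    · rw [interior_Icc]
      intro t ht
      obtain ⟨ht0, hts'⟩ := ht
      have htμ : t < μ := lt_trans hts' htsμ
      have p1 : 0 < μ - t := by linarith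
      have p2 : 0 < μ + t := by linarith
      have p3 : 0 < 1 - μ + t := by linarith
      have p4 : 0 < 1 - μ - t := by linarith
      rw [(betaH_hasDeriv a b μ t p1.ne' p2.ne' p3.ne' p4.ne').deriv,
        betaH_deriv_eq a b μ t p1.ne' p2.ne' p3.ne' p4.ne']
      apply div_pos
      · have ht2 : t ^ 2 < C / D := (Real.lt_sqrt ht0.le).mp hts'
        rw [lt_div_iff₀ hD] at ht2
        rw [hNeq t]
        nlinarith
      · exact mul_pos (mul_pos p1 p2) (mul_pos p4 p3)
  -- H strictly decreasing on [ts, μ)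
  have hanti : StrictAntiOn (betaH a b μ) (Ico ts μ) := by
    apply strictAntiOn_of_deriv_neg (convex_Ico ts μ)
    · intro t ht
      obtain ⟨ht0, htμ⟩ := ht
      have h0 : 0 < t := lt_of_lt_of_le hts0 ht0
      exact (betaH_contAt a b μ t (by linarith) (by linarith) (by linarith)
        (by linarith)).continuousWithinAt
    · rw [interior_Ico]
      intro t ht
      obtain ⟨hts', htμ⟩ := ht
      have ht0 : 0 < t := lt_trans hts0 hts'
      have p1 : 0 < μ - t := by linarith
      have p2 : 0 < μ + t := by linarith
      have p3 : 0 < 1 - μ + t := by linarith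
      have p4 : 0 < 1 - μ - t := by linarith
      rw [(betaH_hasDeriv a b μ t p1.ne' p2.ne' p3.ne' p4.ne').deriv,
        betaH_deriv_eq a b μ t p1.ne' p2.ne' p3.ne' p4.ne']
      apply div_neg_of_neg_of_pos
      · have ht2 : C / D < t ^ 2 := (Real.sqrt_lt' ht0).mp hts'
        rw [div_lt_iff₀ hD] at ht2
        rw [hNeq t]
        nlinarith
      · exact mul_pos (mul_pos p1 p2) (mul_pos p4 p3)
  have hHts : 0 < betaH a b μ ts := by
    have := hmono (left_mem_Icc.mpr hts0.le) (right_mem_Icc.mpr hts0.le) hts0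
    rwa [betaH_zero] at this
  -- find p ∈ (ts, μ) with H p < 0
  have hqc : Continuous (fun t => betaf a b (μ - t) - betaf a b (μ + t)) :=
    ((betaf_cont ha.le hb.le).comp (continuous_const.sub continuous_id)).sub
      ((betaf_cont ha.le hb.le).comp (continuous_const.add continuous_id))
  have hqμ : betaf a b (μ - μ) - betaf a b (μ + μ) < 0 := by
    rw [sub_self, betaf_zero ha, zero_sub]
    exact neg_neg_of_pos (betaf_pos (by linarith) (by linarith))
  have hq : ∀ᶠ t in nhdsWithin μ (Iio μ),
      betaf a b (μ - t) - betaf a b (μ + t) < 0 :=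
    ((hqc.tendsto μ).eventually_lt_const hqμ).filter_mono nhdsWithin_le_nhds
  have hmem : Ioo ts μ ∈ nhdsWithin μ (Iio μ) := Ioo_mem_nhdsLT_of_mem ⟨htsμ, le_rfl⟩
  obtain ⟨p, hqp, hp⟩ := (hq.and (Filter.eventually_of_mem hmem (fun x hx => hx))).exists
  have hpμ : p < μ := hp.2
  have hp0 : 0 < p := lt_trans hts0 hp.1
  have hHp : betaH a b μ p < 0 := by
    rw [betaH_neg_iff hp0.le (by linarith) (by linarith)]
    linarith
  -- IVT: t₁ ∈ (ts, p) with H t₁ = 0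
  have hcont2 : ContinuousOn (betaH a b μ) (Icc ts p) := by
    intro t ht
    obtain ⟨ht0, htp⟩ := ht
    have h0 : 0 < t := lt_of_lt_of_le hts0 ht0
    have hμt : t < μ := lt_of_le_of_lt htp hpμ
    exact (betaH_contAt a b μ t (by linarith) (by linarith) (by linarith)
      (by linarith)).continuousWithinAt
  obtain ⟨t₁, ht₁mem, ht₁⟩ := intermediate_value_Ioo' hp.1.le hcont2 ⟨hHp, hHts⟩
  have ht₁0 : 0 < t₁ := lt_trans hts0 ht₁mem.1
  have ht₁μ : t₁ < μ := lt_trans ht₁mem.2 hpμ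
  -- sign facts for h
  have hsign_pos : ∀ t ∈ Ioo (0:ℝ) t₁, betaf a b (μ + t) < betaf a b (μ - t) := by
    intro t ht
    have htμ : t < μ := lt_trans ht.2 ht₁μ
    rw [← betaH_pos_iff ht.1.le (by linarith) (by linarith)]
    rcases le_or_gt t ts with h | h
    · have := hmono (left_mem_Icc.mpr hts0.le) ⟨ht.1.le, h⟩ ht.1
      rwa [betaH_zero] at this
    · have := hanti ⟨h.le, htμ⟩ ⟨ht₁mem.1.le, ht₁μ⟩ ht.2
      rw [ht₁] at this
      exact this
  have hsign_neg : ∀ t ∈ Ioo t₁ μ, betaf a b (μ - t) < betaf a b (μ + t) := by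
    intro t ht
    have ht0 : 0 < t := lt_trans ht₁0 ht.1
    rw [← betaH_neg_iff ht0.le (by linarith [ht.2]) (by linarith [ht.2])]
    have := hanti ⟨ht₁mem.1.le, ht₁μ⟩ ⟨le_trans ht₁mem.1.le ht.1.le, ht.2⟩ ht.1
    rw [ht₁] at this
    exact this
  -- integral inequalities
  have hfc := betaf_cont ha.le hb.le
  have hgc : Continuous (fun t => (t₁ - t) * (betaf a b (μ - t) - betaf a b (μ + t))) :=
    (continuous_const.sub continuous_id).mul hqc
  have I1 : 0 < ∫ t in (0:ℝ)..t₁, (t₁ - t) * (betaf a b (μ - t) - betaf a b (μ + t)) := by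
    apply intervalIntegral.intervalIntegral_pos_of_pos_on (hgc.intervalIntegrable 0 t₁)
    · intro x hx
      exact mul_pos (by linarith [hx.2]) (sub_pos.mpr (hsign_pos x hx))
    · exact ht₁0
  have I2 : 0 < ∫ t in t₁..μ, (t₁ - t) * (betaf a b (μ - t) - betaf a b (μ + t)) := by
    apply intervalIntegral.intervalIntegral_pos_of_pos_on (hgc.intervalIntegrable t₁ μ)
    · intro x hx
      exact mul_pos_of_neg_of_neg (by linarith [hx.1]) (sub_neg.mpr (hsign_neg x hx))
    · exact ht₁μ
  have Itot : 0 < ∫ t in (0:ℝ)..μ, (t₁ - t) * (betaf a b (μ - t) - betaf a b (μ + t)) := by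
    rw [← intervalIntegral.integral_add_adjacent_intervals (hgc.intervalIntegrable 0 t₁)
      (hgc.intervalIntegrable t₁ μ)]
    linarith
  -- expand the integral
  have hc1 : Continuous (fun t => betaf a b (μ - t)) :=
    hfc.comp (continuous_const.sub continuous_id)
  have hc2 : Continuous (fun t => betaf a b (μ + t)) :=
    hfc.comp (continuous_const.add continuous_id)
  have expand : (∫ t in (0:ℝ)..μ, (t₁ - t) * (betaf a b (μ - t) - betaf a b (μ + t)))
      = t₁ * (∫ t in (0:ℝ)..μ, (betaf a b (μ - t) - betaf a b (μ + t)))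
        - ∫ t in (0:ℝ)..μ, t * (betaf a b (μ - t) - betaf a b (μ + t)) := by
    have int1 : IntervalIntegrable (fun t => t₁ * (betaf a b (μ - t) - betaf a b (μ + t)))
        volume 0 μ := by
      apply Continuous.intervalIntegrable
      exact continuous_const.mul hqc
    have int2 : IntervalIntegrable (fun t => t * (betaf a b (μ - t) - betaf a b (μ + t)))
        volume 0 μ := by
      apply Continuous.intervalIntegrable
      exact continuous_id.mul hqc
    rw [← intervalIntegral.integral_const_mul, ← intervalIntegral.integral_sub int1 int2]
    apply intervalIntegral.integral_congr
    intro x _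
    ring
  -- ∫ h = ∫₀^μ f - ∫_μ^{2μ} f
  have eh : (∫ t in (0:ℝ)..μ, (betaf a b (μ - t) - betaf a b (μ + t)))
      = (∫ x in (0:ℝ)..μ, betaf a b x) - ∫ x in μ..(2 * μ), betaf a b x := by
    rw [intervalIntegral.integral_sub (hc1.intervalIntegrable 0 μ) (hc2.intervalIntegrable 0 μ)]
    congr 1
    · rw [intervalIntegral.integral_comp_sub_left (betaf a b) μ]
      norm_num
    · rw [intervalIntegral.integral_comp_add_left (betaf a b) μ]
      norm_num [two_mul]
  -- ∫ t * h
  have hgmc : Continuous (fun x => (μ - x) * betaf a b x) :=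
    (continuous_const.sub continuous_id).mul hfc
  have hgpc : Continuous (fun x => (x - μ) * betaf a b x) :=
    (continuous_id.sub continuous_const).mul hfc
  have eth : (∫ t in (0:ℝ)..μ, t * (betaf a b (μ - t) - betaf a b (μ + t)))
      = (∫ x in (0:ℝ)..μ, (μ - x) * betaf a b x)
        - ∫ x in μ..(2 * μ), (x - μ) * betaf a b x := by
    have s1 : (∫ t in (0:ℝ)..μ, t * betaf a b (μ - t))
        = ∫ x in (0:ℝ)..μ, (μ - x) * betaf a b x := by
      have hfe : (fun t => t * betaf a b (μ - t))
          = (fun t => (fun x => (μ - x) * betaf a b x) (μ - t)) := by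
        funext t
        simp [sub_sub_cancel]
      rw [hfe, intervalIntegral.integral_comp_sub_left (fun x => (μ - x) * betaf a b x) μ]
      norm_num
    have s2 : (∫ t in (0:ℝ)..μ, t * betaf a b (μ + t))
        = ∫ x in μ..(2 * μ), (x - μ) * betaf a b x := by
      have hfe : (fun t => t * betaf a b (μ + t))
          = (fun t => (fun x => (x - μ) * betaf a b x) (μ + t)) := by
        funext t
        simp [add_sub_cancel_left]
      rw [hfe, intervalIntegral.integral_comp_add_left (fun x => (x - μ) * betaf a b x) μ]
      norm_num [two_mul]
    have hsplit : (∫ t in (0:ℝ)..μ, t * (betaf a b (μ - t) - betaf a b (μ + t)))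
        = (∫ t in (0:ℝ)..μ, t * betaf a b (μ - t))
          - ∫ t in (0:ℝ)..μ, t * betaf a b (μ + t) := by
      have j1 : IntervalIntegrable (fun t => t * betaf a b (μ - t)) volume 0 μ := by
        apply Continuous.intervalIntegrable
        exact continuous_id.mul hc1
      have j2 : IntervalIntegrable (fun t => t * betaf a b (μ + t)) volume 0 μ := by
        apply Continuous.intervalIntegrable
        exact continuous_id.mul hc2
      rw [← intervalIntegral.integral_sub j1 j2]
      apply intervalIntegral.integral_congr
      intro x _
      ring
    rw [hsplit, s1, s2]
  -- mean identity juggling : ∫ t*h = T := ∫_{2μ}^1 (x-μ) f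
  have hmean := mean_identity ha hb
  rw [← hμ_def] at hmean
  have B1 : IntervalIntegrable (fun x => (μ - x) * betaf a b x) volume 0 μ :=
    hgmc.intervalIntegrable 0 μ
  have B2 : IntervalIntegrable (fun x => (μ - x) * betaf a b x) volume μ (2 * μ) :=
    hgmc.intervalIntegrable μ (2 * μ)
  have B3 : IntervalIntegrable (fun x => (μ - x) * betaf a b x) volume 0 (2 * μ) :=
    hgmc.intervalIntegrable 0 (2 * μ)
  have B4 : IntervalIntegrable (fun x => (μ - x) * betaf a b x) volume (2 * μ) 1 :=
    hgmc.intervalIntegrable (2 * μ) 1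
  have A1 := intervalIntegral.integral_add_adjacent_intervals B1 B2
  have A2 := intervalIntegral.integral_add_adjacent_intervals B3 B4
  rw [hmean] at A2
  have hT' : (∫ x in (2 * μ)..1, (μ - x) * betaf a b x)
      = - ∫ x in (2 * μ)..1, (x - μ) * betaf a b x := by
    rw [← intervalIntegral.integral_neg]
    apply intervalIntegral.integral_congr
    intro x _
    ring
  have hneg : (∫ x in μ..(2 * μ), (μ - x) * betaf a b x)
      = - ∫ x in μ..(2 * μ), (x - μ) * betaf a b x := by
    rw [← intervalIntegral.integral_neg]
    apply intervalIntegral.integral_congr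
    intro x _
    ring
  have eT : (∫ t in (0:ℝ)..μ, t * (betaf a b (μ - t) - betaf a b (μ + t)))
      = ∫ x in (2 * μ)..1, (x - μ) * betaf a b x := by
    rw [eth]
    linarith [A1, A2, hT', hneg]
  -- S and T comparisons
  have hS : 0 < ∫ x in (2 * μ)..1, betaf a b x := by
    apply intervalIntegral.intervalIntegral_pos_of_pos_on (hfc.intervalIntegrable (2 * μ) 1)
    · intro x hx
      exact betaf_pos (by linarith [hx.1]) hx.2
    · linarith
  have hTS : μ * (∫ x in (2 * μ)..1, betaf a b x)
      < ∫ x in (2 * μ)..1, (x - μ) * betaf a b x := by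
    have h1 : 0 < ∫ x in (2 * μ)..1, (x - 2 * μ) * betaf a b x := by
      have jj : IntervalIntegrable (fun x => (x - 2 * μ) * betaf a b x) volume (2 * μ) 1 := by
        apply Continuous.intervalIntegrable
        exact (continuous_id.sub continuous_const).mul hfc
      apply intervalIntegral.intervalIntegral_pos_of_pos_on jj
      · intro x hx
        exact mul_pos (by linarith [hx.1]) (betaf_pos (by linarith [hx.1]) hx.2)
      · linarith
    have h2 : (∫ x in (2 * μ)..1, (x - 2 * μ) * betaf a b x)
        = (∫ x in (2 * μ)..1, (x - μ) * betaf a b x)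
          - μ * ∫ x in (2 * μ)..1, betaf a b x := by
      have j1 : IntervalIntegrable (fun x => (x - μ) * betaf a b x) volume (2 * μ) 1 :=
        hgpc.intervalIntegrable (2 * μ) 1
      have j2 : IntervalIntegrable (fun x => μ * betaf a b x) volume (2 * μ) 1 := by
        apply Continuous.intervalIntegrable
        exact continuous_const.mul hfc
      rw [← intervalIntegral.integral_const_mul, ← intervalIntegral.integral_sub j1 j2]
      apply intervalIntegral.integral_congr
      intro x _
      ring
    linarith
  -- final assembly
  have hIH : t₁ * (∫ x in (2 * μ)..1, betaf a b x)
      < t₁ * ∫ t in (0:ℝ)..μ, (betaf a b (μ - t) - betaf a b (μ + t)) := by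
    have hμt : t₁ * (∫ x in (2 * μ)..1, betaf a b x)
        < μ * (∫ x in (2 * μ)..1, betaf a b x) :=
      mul_lt_mul_of_pos_right ht₁μ hS
    rw [expand, eT] at Itot
    linarith
  have hfin : (∫ x in (2 * μ)..1, betaf a b x)
      < ∫ t in (0:ℝ)..μ, (betaf a b (μ - t) - betaf a b (μ + t)) :=
    (mul_lt_mul_iff_right₀ ht₁0).mp hIH
  have hadj : (∫ x in μ..1, betaf a b x)
      = (∫ x in μ..(2 * μ), betaf a b x) + ∫ x in (2 * μ)..1, betaf a b x :=
    (intervalIntegral.integral_add_adjacent_intervals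
      (hfc.intervalIntegrable μ (2 * μ)) (hfc.intervalIntegrable (2 * μ) 1)).symm
  rw [eh] at hfin
  linarith


lemma main_case {a b M : ℝ} (ha : 1 < a) (hab : a < b) (hM : IsBetaMedian a b M) :
    (a - 1) / (a + b - 2) < M ∧ M < a / (a + b) := by
  have hb : 1 < b := lt_trans ha hab
  have hs : (0:ℝ) < a + b - 2 := by linarith
  have habp : (0:ℝ) < a + b := by linarith
  have hmed := median_interval hM
  have hmode : (a - 1) / (a + b - 2) ∈ Set.Ioo (0:ℝ) 1 :=
    ⟨div_pos (by linarith) hs, by rw [div_lt_one hs]; linarith⟩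
  have hmean : a / (a + b) ∈ Set.Ioo (0:ℝ) 1 :=
    ⟨div_pos (by linarith) habp, by rw [div_lt_one habp]; linarith⟩
  exact ⟨lt_median ha.le hb.le hM.1 hmode hmed (ineqA ha hab),
    gt_median ha.le hb.le hM.1 hmean hmed (ineqB ha hab)⟩

end BetaAux

theorem stmt_10 (a b M : ℝ) (hM : IsBetaMedian a b M) :
    (1 < a → a < b → (a - 1) / (a + b - 2) < M ∧ M < a / (a + b))
    ∧ (1 < b → b < a → a / (a + b) < M ∧ M < (a - 1) / (a + b - 2)) := by
  constructor
  · intro ha hab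
    exact main_case ha hab hM
  · intro hb hba
    have ha : 1 < a := lt_trans hb hba
    obtain ⟨u, v⟩ := main_case hb hba (median_symm hM)
    have habp : (0:ℝ) < a + b := by linarith
    have hs : (0:ℝ) < a + b - 2 := by linarith
    constructor
    · have e : b / (b + a) = 1 - a / (a + b) := by
        rw [eq_sub_iff_add_eq, div_add_div _ _ (by linarith : (b:ℝ) + a ≠ 0) habp.ne',
          div_eq_one_iff_eq (mul_ne_zero (by linarith) habp.ne')]
        ring
      rw [e] at v
      linarith
    · have e : (b - 1) / (b + a - 2) = 1 - (a - 1) / (a + b - 2) := by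
        rw [eq_sub_iff_add_eq, div_add_div _ _ (by linarith : (b:ℝ) + a - 2 ≠ 0) hs.ne']
        rw [div_eq_one_iff_eq (mul_ne_zero (by linarith) hs.ne')]
        ring
      rw [e] at u
      linarith
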